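/- For all t, θ ∈ ℝ, let p(z) = e^{-4iθ}(√3·i·t·e^{2iθ} z² − 1) and q(z) = z³ − √3·i·t·e^{-2iθ} z, regarded as complex polynomials of degree at most 3. Then Res₃(p, q) = −e^{-12iθ}(1 + 3t²)²; in particular Res₃(p, q) ≠ 0 for all real t and θ. -/

import Mathlib

open Polynomial Complex

/-- The `2N × 2N` Sylvester matrix of `p` and `q`, both regarded as polynomials of
formal degree `N`: the first `N` rows are the shifts of `(p_0, …, p_N)` and the last
`N` rows are the shifts of `(q_0, …, q_N)`.  `sylvesterRes N p q` is its determinant,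
i.e. the resultant `Res_N(p, q)`. -/
noncomputable def sylvesterRes (N : ℕ) (p q : Polynomial ℂ) : ℂ :=
  Matrix.det (Matrix.of fun i j : Fin (2 * N) =>
    if (i : ℕ) < N then
      (if (i : ℕ) ≤ (j : ℕ) ∧ (j : ℕ) ≤ (i : ℕ) + N then p.coeff ((j : ℕ) - (i : ℕ)) else 0)
    else
      (if (i : ℕ) - N ≤ (j : ℕ) ∧ (j : ℕ) ≤ ((i : ℕ) - N) + N then
        q.coeff ((j : ℕ) - ((i : ℕ) - N)) else 0))

set_option maxRecDepth 8000 in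
set_option maxHeartbeats 4000000 in
lemma sylv_det6 (a b c : ℂ) :
    Matrix.det !![-a, 0, a*b, 0, 0, 0;
                  0, -a, 0, a*b, 0, 0;
                  0, 0, -a, 0, a*b, 0;
                  0, -c, 0, 1, 0, 0;
                  0, 0, -c, 0, 1, 0;
                  0, 0, 0, -c, 0, 1] = -a ^ 3 * (1 - b * c) ^ 2 := by
  simp (config := { maxSteps := 5000000 }) [Matrix.det_succ_row_zero, Fin.sum_univ_succ,
    Fin.succAbove]
  ring

set_option maxRecDepth 8000 in
lemma sylv_abc (a b c : ℂ) :
    sylvesterRes 3 (C a * (C b * X ^ 2 - 1)) (X ^ 3 - C c * X)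
      = -a ^ 3 * (1 - b * c) ^ 2 := by
  have hp : ∀ k : ℕ, (C a * (C b * X ^ 2 - 1)).coeff k
      = if k = 0 then -a else if k = 2 then a * b else 0 := by
    intro k
    rcases k with _ | _ | _ | k <;>
      simp [coeff_C_mul, coeff_sub, coeff_one, coeff_X_pow, Nat.succ_ne_zero]
  have hq : ∀ k : ℕ, ((X : Polynomial ℂ) ^ 3 - C c * X).coeff k
      = if k = 1 then -c else if k = 3 then 1 else 0 := by
    intro k
    rcases k with _ | _ | _ | _ | k <;>
      simp [coeff_X, coeff_X_pow, coeff_C_mul, coeff_sub, Nat.succ_ne_zero]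
  have h6 : (Matrix.of fun i j : Fin (2 * 3) =>
      if (i : ℕ) < 3 then
        (if (i : ℕ) ≤ (j : ℕ) ∧ (j : ℕ) ≤ (i : ℕ) + 3 then
          (C a * (C b * X ^ 2 - 1)).coeff ((j : ℕ) - (i : ℕ)) else 0)
      else
        (if (i : ℕ) - 3 ≤ (j : ℕ) ∧ (j : ℕ) ≤ ((i : ℕ) - 3) + 3 then
          ((X : Polynomial ℂ) ^ 3 - C c * X).coeff ((j : ℕ) - ((i : ℕ) - 3)) else 0))
      = !![-a, 0, a*b, 0, 0, 0;
           0, -a, 0, a*b, 0, 0;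
           0, 0, -a, 0, a*b, 0;
           0, -c, 0, 1, 0, 0;
           0, 0, -c, 0, 1, 0;
           0, 0, 0, -c, 0, 1] := by
    ext i j
    fin_cases i <;> fin_cases j <;>
      simp only [Matrix.of_apply, hp, hq] <;> rfl
  unfold sylvesterRes
  rw [h6, sylv_det6]

/-- for real `t, θ`, the polynomials
`p(z) = e^{-4iθ}(√3·i·t·e^{2iθ} z² − 1)` and `q(z) = z³ − √3·i·t·e^{-2iθ} z`
(arising from the rotated–isorotated tetrahedral family of degree-3 rational maps)
satisfy `Res₃(p, q) = −e^{-12iθ}(1 + 3t²)² ≠ 0`. -/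
theorem resultant_tetrahedral_family (t θ : ℝ) :
    sylvesterRes 3
        (Polynomial.C (Complex.exp (-(4 * Complex.I * θ))) *
          (Polynomial.C ((Real.sqrt 3 : ℂ) * Complex.I * t * Complex.exp (2 * Complex.I * θ)) *
            Polynomial.X ^ 2 - 1))
        (Polynomial.X ^ 3 -
          Polynomial.C ((Real.sqrt 3 : ℂ) * Complex.I * t * Complex.exp (-(2 * Complex.I * θ))) *
            Polynomial.X)
      = -Complex.exp (-(12 * Complex.I * θ)) * (1 + 3 * (t : ℂ) ^ 2) ^ 2 ∧
    sylvesterRes 3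
        (Polynomial.C (Complex.exp (-(4 * Complex.I * θ))) *
          (Polynomial.C ((Real.sqrt 3 : ℂ) * Complex.I * t * Complex.exp (2 * Complex.I * θ)) *
            Polynomial.X ^ 2 - 1))
        (Polynomial.X ^ 3 -
          Polynomial.C ((Real.sqrt 3 : ℂ) * Complex.I * t * Complex.exp (-(2 * Complex.I * θ))) *
            Polynomial.X)
      ≠ 0 := by
  have hexp3 : Complex.exp (-(4 * Complex.I * θ)) ^ 3 = Complex.exp (-(12 * Complex.I * θ)) := by
    rw [← Complex.exp_nat_mul]; ring_nf
  have hsq : (Real.sqrt 3 : ℂ) * (Real.sqrt 3 : ℂ) = 3 := by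
    rw [← Complex.ofReal_mul, Real.mul_self_sqrt (by norm_num)]
    norm_num
  have hprod : Complex.exp (2 * Complex.I * θ) * Complex.exp (-(2 * Complex.I * θ)) = 1 := by
    rw [← Complex.exp_add]; ring_nf; exact Complex.exp_zero
  have key : sylvesterRes 3
        (Polynomial.C (Complex.exp (-(4 * Complex.I * θ))) *
          (Polynomial.C ((Real.sqrt 3 : ℂ) * Complex.I * t * Complex.exp (2 * Complex.I * θ)) *
            Polynomial.X ^ 2 - 1))
        (Polynomial.X ^ 3 -
          Polynomial.C ((Real.sqrt 3 : ℂ) * Complex.I * t * Complex.exp (-(2 * Complex.I * θ))) *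
            Polynomial.X)
      = -Complex.exp (-(12 * Complex.I * θ)) * (1 + 3 * (t : ℂ) ^ 2) ^ 2 := by
    rw [sylv_abc]
    have : ((Real.sqrt 3 : ℂ) * Complex.I * t * Complex.exp (2 * Complex.I * θ)) *
        ((Real.sqrt 3 : ℂ) * Complex.I * t * Complex.exp (-(2 * Complex.I * θ)))
        = -3 * (t : ℂ) ^ 2 := by
      calc _ = ((Real.sqrt 3 : ℂ) * (Real.sqrt 3 : ℂ)) * (Complex.I * Complex.I) *
          (t : ℂ) ^ 2 * (Complex.exp (2 * Complex.I * θ) * Complex.exp (-(2 * Complex.I * θ))) := by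
            ring
        _ = -3 * (t : ℂ) ^ 2 := by
            rw [hsq, Complex.I_mul_I, hprod]; ring
    rw [this, hexp3]
    ring
  refine ⟨key, ?_⟩
  rw [key]
  have h1 : (1 + 3 * (t : ℂ) ^ 2) ≠ 0 := by
    have : (1 + 3 * (t : ℂ) ^ 2) = ((1 + 3 * t ^ 2 : ℝ) : ℂ) := by push_cast; ring
    rw [this, Ne, Complex.ofReal_eq_zero]
    positivity
  have h2 : Complex.exp (-(12 * Complex.I * θ)) ≠ 0 := Complex.exp_ne_zero _
  intro h
  simp only [neg_mul, neg_eq_zero, mul_eq_zero, pow_eq_zero_iff] at h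
  rcases h with h | h
  · exact h2 h
  · exact h1 (pow_eq_zero_iff (by norm_num) |>.mp h)
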